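/- Lemma 3.1, third estimate (pollution term): under the hypotheses of the weighted estimate, assume in addition that the family (B_j) is Lipschitz along the partition, i.e. there is L_B > 0 with ‖B_j − B_{j−1}‖_{op} ≤ L_B·Δt_j for 1 ≤ j ≤ N. Then for every sequence φ^0, …, φ^N in H and every 1 ≤ n ≤ N, (1/2) Σ_{j=1}^{n} K^{n,j}_{1−α}( ⟨B_jφ^j,φ^j⟩ − ⟨B_{j−1}φ^{j−1},φ^{j−1}⟩ ) ≤ ⟨ Σ_{j=1}^{n} K^{n,j}_{1−α}(B_jφ^j − B_{j−1}φ^{j−1}), φ^n ⟩ + (L_B t_n^{1−α} / (2β_0 Γ(2−α))) · ⟨B_nφ^n, φ^n⟩. -/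

import Mathlib

open Finset

/-- The kernel `k_β(s) = s^(β-1)/Γ(β)`. -/
noncomputable def kker (β s : ℝ) : ℝ := s ^ (β - 1) / Real.Gamma β

/-- The discrete L1 kernels `K^{n,j}_{1-α}`. -/
noncomputable def Kd (α : ℝ) (t : ℕ → ℝ) (n j : ℕ) : ℝ :=
  (kker (2 - α) (t n - t (j - 1)) - kker (2 - α) (t n - t j)) / (t j - t (j - 1))

/-- The complementary discrete kernels `P^{n,i}_α`, defined by downward recursion. -/
noncomputable def Pd (α : ℝ) (t : ℕ → ℝ) (n i : ℕ) : ℝ :=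
  if i = n then 1 / Kd α t n n
  else (1 / Kd α t i i) *
    ∑ j ∈ (Finset.Ioc i n).attach,
      Pd α t n j.1 * (Kd α t j.1 (i + 1) - Kd α t j.1 i)
termination_by n - i
decreasing_by
  have h := Finset.mem_Ioc.mp j.2
  omega

private lemma abel_id (K f : ℕ → ℝ) : ∀ n, 1 ≤ n →
    ∑ j ∈ Finset.Icc 1 n, K j * (f j - f (j - 1))
      = K n * f n - K 1 * f 0 - ∑ j ∈ Finset.Icc 1 (n - 1), (K (j + 1) - K j) * f j := by
  intro n hn
  induction n, hn using Nat.le_induction with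
  | base => simp; ring
  | succ n hn ih =>
      obtain ⟨m, rfl⟩ : ∃ m, n = m + 1 := ⟨n - 1, by omega⟩
      rw [Finset.sum_Icc_succ_top (by omega : 1 ≤ m + 1 + 1), ih]
      have h1 : m + 1 + 1 - 1 = m + 1 := by omega
      have h2 : m + 1 - 1 = m := by omega
      rw [h1, h2, Finset.sum_Icc_succ_top (by omega : 1 ≤ m + 1)]
      ring

private lemma telescope_icc (G : ℕ → ℝ) : ∀ n : ℕ, ∑ j ∈ Finset.Icc 1 n, (G (j - 1) - G j) = G 0 - G n := by
  intro n
  induction n with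
  | zero => simp
  | succ n ih =>
      rw [Finset.sum_Icc_succ_top (by omega : 1 ≤ n + 1), ih]
      simp

private lemma abel_nonpos (K f : ℕ → ℝ) (n : ℕ) (hn : 1 ≤ n)
    (hK1 : 0 ≤ K 1) (hKmono : ∀ j, 1 ≤ j → j + 1 ≤ n → K j ≤ K (j + 1))
    (hf : ∀ j, j ≤ n → 0 ≤ f j) (hfn : f n = 0) :
    ∑ j ∈ Finset.Icc 1 n, K j * (f j - f (j - 1)) ≤ 0 := by
  rw [abel_id K f n hn, hfn]
  have h2 : 0 ≤ ∑ j ∈ Finset.Icc 1 (n - 1), (K (j + 1) - K j) * f j :=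
    Finset.sum_nonneg fun j hj => by
      obtain ⟨hj1, hj2⟩ := Finset.mem_Icc.mp hj
      exact mul_nonneg (by linarith [hKmono j hj1 (by omega)]) (hf j (by omega))
  nlinarith [mul_nonneg hK1 (hf 0 (by omega))]


/-- Lemma 3.1, third estimate (pollution term): under the hypotheses of the weighted
estimate and the Lipschitz condition `‖B_j - B_{j-1}‖ ≤ L_B Δt_j`, for `1 ≤ n ≤ N`:
`(1/2) D^α_{t_n} ⟨B_n φ^n, φ^n⟩ ≤ ⟨D^α_{t_n}(B_n φ^n), φ^n⟩
  + (L_B t_n^{1-α}/(2 β₀ Γ(2-α))) ⟨B_n φ^n, φ^n⟩`. -/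
theorem discrete_caputo_pollution_estimate
    {H : Type*} [NormedAddCommGroup H] [InnerProductSpace ℝ H] [CompleteSpace H]
    (α T : ℝ) (N : ℕ) (t : ℕ → ℝ)
    (hα0 : 0 < α) (hα1 : α < 1) (hT : 0 < T)
    (ht0 : t 0 = 0) (htN : t N = T)
    (hmono : ∀ j, j < N → t j < t (j + 1))
    (B : ℕ → H →L[ℝ] H) (β₀ γ₀ L_B : ℝ)
    (hβ₀ : 0 < β₀) (hβγ : β₀ ≤ γ₀) (hLB : 0 < L_B)
    (hBsym : ∀ j, j ≤ N → ∀ x y : H, (inner ℝ (B j x) y : ℝ) = inner ℝ x (B j y))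
    (hBlow : ∀ j, j ≤ N → ∀ x : H, β₀ * ‖x‖ ^ 2 ≤ (inner ℝ (B j x) x : ℝ))
    (hBup : ∀ j, j ≤ N → ∀ x : H, (inner ℝ (B j x) x : ℝ) ≤ γ₀ * ‖x‖ ^ 2)
    (hLip : ∀ j, 1 ≤ j → j ≤ N → ‖B j - B (j - 1)‖ ≤ L_B * (t j - t (j - 1)))
    (φ : ℕ → H) :
    ∀ n, 1 ≤ n → n ≤ N →
      (1 / 2) * ∑ j ∈ Finset.Icc 1 n,
          Kd α t n j * ((inner ℝ (B j (φ j)) (φ j) : ℝ)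
            - (inner ℝ (B (j - 1) (φ (j - 1))) (φ (j - 1)) : ℝ))
        ≤ (inner ℝ (∑ j ∈ Finset.Icc 1 n,
              Kd α t n j • (B j (φ j) - B (j - 1) (φ (j - 1)))) (φ n) : ℝ)
          + (L_B * t n ^ ((1 : ℝ) - α) / (2 * β₀ * Real.Gamma (2 - α))) *
              (inner ℝ (B n (φ n)) (φ n) : ℝ) := by
  intro n hn1 hnN
  have hΓ : 0 < Real.Gamma (2 - α) := Real.Gamma_pos_of_pos (by linarith)
  have hexp : (2 : ℝ) - α - 1 = 1 - α := by ring
  have hexp0 : (0 : ℝ) < 1 - α := by linarith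
  -- monotonicity of the partition
  have hts : ∀ j : ℕ, j ≤ N → ∀ i : ℕ, i < j → t i < t j := by
    intro j
    induction j with
    | zero => intro _ i hi; omega
    | succ j ih =>
        intro hjN i hij
        rcases Nat.lt_succ_iff_lt_or_eq.mp hij with h | h
        · exact lt_trans (ih (by omega) i h) (hmono j (by omega))
        · subst h; exact hmono i (by omega)
  have htle : ∀ i j : ℕ, i ≤ j → j ≤ N → t i ≤ t j := by
    intro i j hij hjN
    rcases eq_or_lt_of_le hij with h | h
    · rw [h]
    · exact (hts j hjN i h).le
  have htn0 : 0 ≤ t n := ht0 ▸ htle 0 n (by omega) hnN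
  -- concavity of the kernel
  have hconc : ConcaveOn ℝ (Set.Ici 0) (kker (2 - α)) := by
    have h := (Real.concaveOn_rpow (p := 2 - α - 1) (by linarith) (by linarith)).smul
      (c := (Real.Gamma (2 - α))⁻¹) (by positivity)
    have e : kker (2 - α) = fun x => (Real.Gamma (2 - α))⁻¹ • x ^ (2 - α - 1) := by
      funext x
      simp [kker, smul_eq_mul, div_eq_inv_mul]
    rw [e]; exact h
  -- nonnegativity of the discrete kernels
  have hK0 : ∀ j : ℕ, 1 ≤ j → j ≤ n → 0 ≤ Kd α t n j := by
    intro j hj1 hjn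
    have hΔ : 0 < t j - t (j - 1) := by
      have := hts j (by omega) (j - 1) (by omega); linarith
    have ha : (0 : ℝ) ≤ t n - t j := by
      have := htle j n hjn hnN; linarith
    have hab : t n - t j ≤ t n - t (j - 1) := by linarith
    have hk : kker (2 - α) (t n - t j) ≤ kker (2 - α) (t n - t (j - 1)) :=
      (div_le_div_iff_of_pos_right hΓ).mpr (Real.rpow_le_rpow ha hab (by linarith))
    exact div_nonneg (by linarith) hΔ.le
  -- monotonicity of the discrete kernels
  have hKmono : ∀ j : ℕ, 1 ≤ j → j + 1 ≤ n → Kd α t n j ≤ Kd α t n (j + 1) := by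
    intro j hj1 hjn
    have hx : t n - t (j + 1) ∈ Set.Ici (0 : ℝ) := by
      have := htle (j + 1) n hjn hnN
      simp only [Set.mem_Ici]; linarith
    have hz : t n - t (j - 1) ∈ Set.Ici (0 : ℝ) := by
      have := htle (j - 1) n (by omega) hnN
      simp only [Set.mem_Ici]; linarith
    have hxy : t n - t (j + 1) < t n - t j := by
      have := hts (j + 1) (by omega) j (by omega); linarith
    have hyz : t n - t j < t n - t (j - 1) := by
      have := hts j (by omega) (j - 1) (by omega); linarith
    have hs := hconc.slope_anti_adjacent hx hz hxy hyz
    have e1 : (t n - t (j - 1)) - (t n - t j) = t j - t (j - 1) := by ring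
    have e2 : (t n - t j) - (t n - t (j + 1)) = t (j + 1) - t j := by ring
    rw [e1, e2] at hs
    simpa [Kd, Nat.add_sub_cancel] using hs
  -- quadratic form facts
  have hQ0 : ∀ j : ℕ, j ≤ N → ∀ x : H, 0 ≤ (inner ℝ (B j x) x : ℝ) := fun j hj x =>
    le_trans (by positivity) (hBlow j hj x)
  have hquad : ∀ j : ℕ, j ≤ N → ∀ x y : H,
      2 * (inner ℝ (B j x) y : ℝ) ≤ (inner ℝ (B j x) x : ℝ) + (inner ℝ (B j y) y : ℝ) := by
    intro j hj x y
    have h0 := hQ0 j hj (x - y)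
    have hsymm : (inner ℝ (B j x) y : ℝ) = (inner ℝ (B j y) x : ℝ) := by
      rw [hBsym j hj x y, real_inner_comm]
    rw [map_sub, inner_sub_left, inner_sub_right, inner_sub_right] at h0
    linarith
  -- Abel summation bound
  have hSf : ∑ j ∈ Finset.Icc 1 n, Kd α t n j *
      ((fun i => (1/2) * (inner ℝ (B i (φ n)) (φ n) : ℝ)
        - ((inner ℝ (B i (φ i)) (φ n) : ℝ) - (1/2) * (inner ℝ (B i (φ i)) (φ i) : ℝ))) j
       - (fun i => (1/2) * (inner ℝ (B i (φ n)) (φ n) : ℝ)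
        - ((inner ℝ (B i (φ i)) (φ n) : ℝ) - (1/2) * (inner ℝ (B i (φ i)) (φ i) : ℝ))) (j - 1)) ≤ 0 := by
    apply abel_nonpos (Kd α t n) _ n hn1 (hK0 1 le_rfl hn1) hKmono
    · intro j hj
      have := hquad j (le_trans hj hnN) (φ j) (φ n)
      linarith
    · ring
  simp only [] at hSf
  -- telescoping sum of the kernels times the step sizes
  have htele : ∑ j ∈ Finset.Icc 1 n, Kd α t n j * (t j - t (j - 1))
      = t n ^ ((1 : ℝ) - α) / Real.Gamma (2 - α) := by
    have e : ∀ j ∈ Finset.Icc 1 n, Kd α t n j * (t j - t (j - 1))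
        = (fun i => kker (2 - α) (t n - t i)) (j - 1) - (fun i => kker (2 - α) (t n - t i)) j := by
      intro j hj
      obtain ⟨hj1, hj2⟩ := Finset.mem_Icc.mp hj
      have hΔ : t j - t (j - 1) ≠ 0 := by
        have := hts j (by omega) (j - 1) (by omega); linarith
      simp only [Kd]
      field_simp
    rw [Finset.sum_congr rfl e, telescope_icc (fun i => kker (2 - α) (t n - t i))]
    simp only [ht0, sub_zero, sub_self]
    rw [show kker (2 - α) 0 = 0 by
      simp [kker, Real.zero_rpow (by linarith : (2 : ℝ) - α - 1 ≠ 0)]]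
    rw [show kker (2 - α) (t n) = t n ^ ((1 : ℝ) - α) / Real.Gamma (2 - α) by
      simp [kker, hexp]]
    ring
  -- pollution sum bound
  have hSh : -(L_B / 2 * ‖φ n‖ ^ 2) * (t n ^ ((1 : ℝ) - α) / Real.Gamma (2 - α))
      ≤ ∑ j ∈ Finset.Icc 1 n, Kd α t n j *
          ((1/2) * (inner ℝ (B j (φ n)) (φ n) : ℝ) - (1/2) * (inner ℝ (B (j - 1) (φ n)) (φ n) : ℝ)) := by
    rw [← htele, Finset.mul_sum]
    apply Finset.sum_le_sum
    intro j hj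
    obtain ⟨hj1, hj2⟩ := Finset.mem_Icc.mp hj
    have hb : (inner ℝ (B (j - 1) (φ n)) (φ n) : ℝ) - (inner ℝ (B j (φ n)) (φ n) : ℝ)
        ≤ L_B * (t j - t (j - 1)) * ‖φ n‖ ^ 2 := by
      have h1 : (inner ℝ ((B (j - 1) - B j) (φ n)) (φ n) : ℝ) ≤ ‖(B (j - 1) - B j) (φ n)‖ * ‖φ n‖ :=
        real_inner_le_norm _ _
      have h2 : ‖(B (j - 1) - B j) (φ n)‖ ≤ ‖B (j - 1) - B j‖ * ‖φ n‖ :=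
        ContinuousLinearMap.le_opNorm _ _
      have h3 : ‖B (j - 1) - B j‖ = ‖B j - B (j - 1)‖ := norm_sub_rev _ _
      have h4 := hLip j hj1 (le_trans hj2 hnN)
      have h5 : (inner ℝ ((B (j - 1) - B j) (φ n)) (φ n) : ℝ)
          = (inner ℝ (B (j - 1) (φ n)) (φ n) : ℝ) - (inner ℝ (B j (φ n)) (φ n) : ℝ) := by
        simp [ContinuousLinearMap.sub_apply, inner_sub_left]
      have hnφ : 0 ≤ ‖φ n‖ := norm_nonneg _
      nlinarith [norm_nonneg ((B (j - 1) - B j) (φ n))]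
    have hKj := hK0 j hj1 hj2
    have hhalf : -(L_B / 2 * ‖φ n‖ ^ 2 * (t j - t (j - 1)))
        ≤ (1/2) * (inner ℝ (B j (φ n)) (φ n) : ℝ) - (1/2) * (inner ℝ (B (j - 1) (φ n)) (φ n) : ℝ) := by
      linarith
    calc -(L_B / 2 * ‖φ n‖ ^ 2) * (Kd α t n j * (t j - t (j - 1)))
        = Kd α t n j * (-(L_B / 2 * ‖φ n‖ ^ 2 * (t j - t (j - 1)))) := by ring
      _ ≤ _ := mul_le_mul_of_nonneg_left hhalf hKj
  -- splitting identity
  have hsplit : ∑ j ∈ Finset.Icc 1 n, Kd α t n j *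
      (((1/2) * (inner ℝ (B j (φ n)) (φ n) : ℝ)
        - ((inner ℝ (B j (φ j)) (φ n) : ℝ) - (1/2) * (inner ℝ (B j (φ j)) (φ j) : ℝ)))
       - ((1/2) * (inner ℝ (B (j - 1) (φ n)) (φ n) : ℝ)
        - ((inner ℝ (B (j - 1) (φ (j - 1))) (φ n) : ℝ)
          - (1/2) * (inner ℝ (B (j - 1) (φ (j - 1))) (φ (j - 1)) : ℝ))))
      = (∑ j ∈ Finset.Icc 1 n, Kd α t n j *
          ((1/2) * (inner ℝ (B j (φ n)) (φ n) : ℝ) - (1/2) * (inner ℝ (B (j - 1) (φ n)) (φ n) : ℝ)))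
        - ((∑ j ∈ Finset.Icc 1 n, Kd α t n j *
            ((inner ℝ (B j (φ j)) (φ n) : ℝ) - (inner ℝ (B (j - 1) (φ (j - 1))) (φ n) : ℝ)))
          - (1 / 2) * ∑ j ∈ Finset.Icc 1 n, Kd α t n j *
            ((inner ℝ (B j (φ j)) (φ j) : ℝ)
              - (inner ℝ (B (j - 1) (φ (j - 1))) (φ (j - 1)) : ℝ))) := by
    rw [Finset.mul_sum, ← Finset.sum_sub_distrib, ← Finset.sum_sub_distrib]
    exact Finset.sum_congr rfl fun j _ => by ring
  rw [hsplit] at hSf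
  -- final coefficient comparison
  have hfinal : L_B / 2 * ‖φ n‖ ^ 2 * (t n ^ ((1 : ℝ) - α) / Real.Gamma (2 - α))
      ≤ (L_B * t n ^ ((1 : ℝ) - α) / (2 * β₀ * Real.Gamma (2 - α))) *
          (inner ℝ (B n (φ n)) (φ n) : ℝ) := by
    have hS : 0 ≤ t n ^ ((1 : ℝ) - α) := Real.rpow_nonneg htn0 _
    have hc : 0 ≤ L_B * t n ^ ((1 : ℝ) - α) / (2 * β₀ * Real.Gamma (2 - α)) := by positivity
    have key := mul_le_mul_of_nonneg_left (hBlow n hnN (φ n)) hc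
    have heq : (L_B * t n ^ ((1 : ℝ) - α) / (2 * β₀ * Real.Gamma (2 - α))) * (β₀ * ‖φ n‖ ^ 2)
        = L_B / 2 * ‖φ n‖ ^ 2 * (t n ^ ((1 : ℝ) - α) / Real.Gamma (2 - α)) := by
      field_simp
    linarith
  -- conclude
  rw [sum_inner]
  simp only [real_inner_smul_left, inner_sub_left]
  linarith
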